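/- Let p > 1 and s ∈ ℂ, and define m_s(fp(p)) = ∫_{(√p−1)²}^{(√p+1)²} x^s · √(((√p+1)² − x)(x − (√p−1)²))/(2πx) dx, where x^s = exp(s·log x) for x > 0. Then m_s(fp(p)) = (p−1)^{1+2s} · m_{−s−1}(fp(p)), where (p−1)^{1+2s} = exp((1+2s)·log(p−1)). -/

import Mathlib

open MeasureTheory Set

/-- Density of the free Poisson (Marchenko–Pastur) distribution `fp(p)` for `p > 1`:
`√(((√p+1)² - x)(x - (√p-1)²))/(2πx)` on `((√p-1)², (√p+1)²)`. -/
noncomputable def fpDensity (p : ℝ) (x : ℝ) : ℝ :=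
  Real.sqrt (((Real.sqrt p + 1) ^ 2 - x) * (x - (Real.sqrt p - 1) ^ 2)) / (2 * Real.pi * x)

/-- The free Poisson (Marchenko–Pastur) distribution `fp(p)` for `p > 1`. -/
noncomputable def fpMeasure (p : ℝ) : Measure ℝ :=
  MeasureTheory.volume.withDensity
    (fun x => ENNReal.ofReal
      ((Set.Ioo ((Real.sqrt p - 1) ^ 2) ((Real.sqrt p + 1) ^ 2)).indicator (fpDensity p) x))

/-- The moment of complex order `s` of `fp(p)`:
`m_s(fp(p)) = ∫ x^s dfp(p)(x)` where `x^s = exp(s · log x)` for `x > 0`. -/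
noncomputable def complexMoment (p : ℝ) (s : ℂ) : ℂ :=
  ∫ x : ℝ, Complex.exp (s * (Real.log x : ℂ)) ∂(fpMeasure p)

/-- `complexMoment` as a set integral against the Lebesgue measure. -/
lemma complexMoment_eq (p : ℝ) (s : ℂ) :
    complexMoment p s = ∫ x in Ioo ((Real.sqrt p - 1) ^ 2) ((Real.sqrt p + 1) ^ 2),
      fpDensity p x • Complex.exp (s * (Real.log x : ℂ)) := by
  have hmeas : Measurable (fun x => (Ioo ((Real.sqrt p - 1) ^ 2) ((Real.sqrt p + 1) ^ 2)).indicator (fpDensity p) x) := by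
    apply Measurable.indicator ?_ measurableSet_Ioo
    unfold fpDensity
    fun_prop
  have hnn : ∀ x, 0 ≤ (Ioo ((Real.sqrt p - 1) ^ 2) ((Real.sqrt p + 1) ^ 2)).indicator (fpDensity p) x := by
    intro x
    apply Set.indicator_nonneg
    intro y hy
    have hy0 : 0 < y := lt_of_le_of_lt (sq_nonneg _) hy.1
    unfold fpDensity
    apply div_nonneg (Real.sqrt_nonneg _)
    positivity
  rw [complexMoment, fpMeasure]
  rw [show (fun x => ENNReal.ofReal ((Ioo ((Real.sqrt p - 1) ^ 2) ((Real.sqrt p + 1) ^ 2)).indicator (fpDensity p) x))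
      = (fun x => (((Ioo ((Real.sqrt p - 1) ^ 2) ((Real.sqrt p + 1) ^ 2)).indicator (fpDensity p) x).toNNReal : ENNReal)) from rfl]
  rw [integral_withDensity_eq_integral_smul hmeas.real_toNNReal]
  rw [← integral_indicator measurableSet_Ioo]
  congr 1
  ext x
  rw [NNReal.smul_def, Real.coe_toNNReal _ (hnn x)]
  by_cases hx : x ∈ Ioo ((Real.sqrt p - 1) ^ 2) ((Real.sqrt p + 1) ^ 2)
  · simp [Set.indicator_of_mem hx]
  · simp [Set.indicator_of_notMem hx]

/-- The key pointwise complex-exponential identity. -/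
lemma aux_pointwise (s : ℂ) (c x d : ℝ) (hc : 0 < c) (hx : 0 < x) :
    (|(-(c ^ 2 / x ^ 2))| : ℝ) • ((x / c * d : ℝ) • Complex.exp (s * ((2 * Real.log c - Real.log x : ℝ) : ℂ)))
      = Complex.exp ((1 + 2 * s) * (Real.log c : ℂ)) * ((d : ℝ) • Complex.exp ((-s - 1) * (Real.log x : ℂ))) := by
  have habs : |(-(c ^ 2 / x ^ 2))| = c ^ 2 / x ^ 2 := by
    rw [abs_neg, abs_of_pos (by positivity)]
  rw [habs]
  set L : ℂ := (Real.log c : ℂ)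
  set M : ℂ := (Real.log x : ℂ)
  have h1 : Complex.exp ((1 + 2 * s) * L) = (c : ℂ) * Complex.exp (2 * s * L) := by
    rw [add_mul, one_mul, Complex.exp_add]
    congr 1
    rw [← Complex.ofReal_exp, Real.exp_log hc]
  have h2 : Complex.exp ((-s - 1) * M) = Complex.exp (-(s * M)) * (x : ℂ)⁻¹ := by
    rw [sub_mul, one_mul, Complex.exp_sub, div_eq_mul_inv, neg_mul]
    congr 1
    rw [← Complex.ofReal_exp, Real.exp_log hx]
  have h3 : Complex.exp (s * ((2 * Real.log c - Real.log x : ℝ) : ℂ)) =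
      Complex.exp (2 * s * L) * Complex.exp (-(s * M)) := by
    rw [← Complex.exp_add]
    push_cast
    ring_nf
    rfl
  rw [h1, h2, h3]
  have hcx : (c : ℂ) ≠ 0 := Complex.ofReal_ne_zero.2 hc.ne'
  have hxx : (x : ℂ) ≠ 0 := Complex.ofReal_ne_zero.2 hx.ne'
  simp only [Complex.real_smul]
  push_cast
  field_simp

/-- For `p > 1` and `s ∈ ℂ`, `m_s(fp(p)) = (p-1)^{1+2s} · m_{-s-1}(fp(p))`,
where `(p-1)^{1+2s} = exp((1+2s)·log(p-1))`. -/
theorem fp_complexMoment_reflection (p : ℝ) (hp : 1 < p) (s : ℂ) :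
    complexMoment p s =
      Complex.exp ((1 + 2 * s) * (Real.log (p - 1) : ℂ)) * complexMoment p (-s - 1) := by
  have hp0 : (0:ℝ) ≤ p := by linarith
  have hsp : 1 < Real.sqrt p := by
    have h := Real.sqrt_lt_sqrt (by norm_num) hp
    simpa using h
  set a := (Real.sqrt p - 1) ^ 2 with ha_def
  set b := (Real.sqrt p + 1) ^ 2 with hb_def
  have hc : (0:ℝ) < p - 1 := by linarith
  have ha : 0 < a := pow_pos (by linarith) 2
  have hb : 0 < b := pow_pos (by linarith) 2
  have hsq : Real.sqrt p ^ 2 = p := Real.sq_sqrt hp0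
  have habc : a * b = (p - 1) ^ 2 := by
    have h : a * b = ((Real.sqrt p - 1) * (Real.sqrt p + 1)) ^ 2 := by ring
    rw [h]; congr 1; nlinarith [hsq]
  have hmem : ∀ y ∈ Ioo a b, (p - 1) ^ 2 / y ∈ Ioo a b := by
    intro y hy
    have hy0 : 0 < y := lt_trans ha hy.1
    constructor
    · rw [lt_div_iff₀ hy0]; nlinarith [hy.2]
    · rw [div_lt_iff₀ hy0]; nlinarith [hy.1]
  have himg : (fun y : ℝ => (p - 1) ^ 2 / y) '' Ioo a b = Ioo a b := by
    ext x
    constructor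
    · rintro ⟨y, hy, rfl⟩; exact hmem y hy
    · intro hx
      have hx0 : (0:ℝ) < x := lt_trans ha hx.1
      exact ⟨(p - 1) ^ 2 / x, hmem x hx, by field_simp⟩
  have hderiv : ∀ y ∈ Ioo a b,
      HasDerivWithinAt (fun y : ℝ => (p - 1) ^ 2 / y) (-((p - 1) ^ 2 / y ^ 2)) (Ioo a b) y := by
    intro y hy
    have hy0 : 0 < y := lt_trans ha hy.1
    have h := (hasDerivAt_inv hy0.ne').const_mul ((p - 1) ^ 2)
    have h2 : (p - 1) ^ 2 * -(y ^ 2)⁻¹ = -((p - 1) ^ 2 / y ^ 2) := by ring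
    rw [h2] at h
    exact h.hasDerivWithinAt.congr (fun z _ => by ring) (by ring)
  have hinj : Set.InjOn (fun y : ℝ => (p - 1) ^ 2 / y) (Ioo a b) := by
    intro y1 h1 y2 h2 h
    have hy1 : (0:ℝ) < y1 := lt_trans ha h1.1
    have hy2 : (0:ℝ) < y2 := lt_trans ha h2.1
    field_simp at h
    nlinarith [h]
  rw [complexMoment_eq p s, complexMoment_eq p (-s - 1), ← integral_const_mul, ← ha_def, ← hb_def]
  rw [← himg, integral_image_eq_integral_abs_deriv_smul measurableSet_Ioo hderiv hinj, himg]
  apply setIntegral_congr_fun measurableSet_Ioo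
  intro x hx
  have hx0 : 0 < x := lt_trans ha hx.1
  have hdens : fpDensity p ((p - 1) ^ 2 / x) = x / (p - 1) * fpDensity p x := by
    have key : (b - (p - 1) ^ 2 / x) * ((p - 1) ^ 2 / x - a)
        = ((p - 1) / x) ^ 2 * ((b - x) * (x - a)) := by
      rw [div_pow, ← habc]; field_simp
    unfold fpDensity
    rw [← ha_def, ← hb_def, key, Real.sqrt_mul (sq_nonneg _),
      Real.sqrt_sq (le_of_lt (div_pos hc hx0))]
    rw [show (b - x) * (x - a) = ((Real.sqrt p + 1) ^ 2 - x) * (x - (Real.sqrt p - 1) ^ 2) from rfl]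
    have hpi := Real.pi_pos
    field_simp
  have hlog : Real.log ((p - 1) ^ 2 / x) = 2 * Real.log (p - 1) - Real.log x := by
    rw [Real.log_div (by positivity) hx0.ne', Real.log_pow]
    norm_num
  simp only
  rw [hdens, hlog]
  exact aux_pointwise s (p - 1) x (fpDensity p x) hc hx0
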